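/- Fix a squarefree d ≡ 2 mod 4 and an ideal class [a] in the class group of ℤ[√(-d)]. The number of primitive ideals b in the class [a] with N(b) ≤ Y·√d is O(1 + Y), with an absolute implied constant. -/

import Mathlib

open scoped Zsqrtd

/-- An ideal of `ℤ√d` is primitive if no rational integer `n > 1` divides it. -/
def IsPrimitiveIdeal {d : ℤ} (a : Ideal (ℤ√d)) : Prop :=
  ∀ n : ℕ, 1 < n → ¬ a ≤ Ideal.span {(n : ℤ√d)}

/-- The norm of an ideal `a`, i.e. the cardinality of `O/a`. -/
noncomputable def idealNorm {d : ℤ} (a : Ideal (ℤ√d)) : ℕ :=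
  Nat.card ((ℤ√d) ⧸ a)

/-- Two nonzero ideals lie in the same ideal class if `(x)·b = (y)·a` for some
nonzero `x, y`. -/
def SameIdealClass {d : ℤ} (a b : Ideal (ℤ√d)) : Prop :=
  ∃ x y : ℤ√d, x ≠ 0 ∧ y ≠ 0 ∧
    Ideal.span {x} * b = Ideal.span {y} * a

section Helpers

variable {d : ℕ}

lemma Zsq.norm_nonneg' (hd : 0 < d) (z : ℤ√(-(d:ℤ))) : 0 ≤ z.norm :=
  Zsqrtd.norm_nonneg (by omega : -(d:ℤ) ≤ 0) z

lemma Zsq.norm_def (z : ℤ√(-(d:ℤ))) : z.norm = z.re * z.re + d * (z.im * z.im) := by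
  simp [Zsqrtd.norm]; ring

lemma Zsq.norm_pos (hd : 0 < d) {z : ℤ√(-(d:ℤ))} (hz : z ≠ 0) : 0 < z.norm := by
  have h0 : z.norm ≠ 0 := fun h =>
    hz ((Zsqrtd.norm_eq_zero_iff (by omega : -(d:ℤ) < 0) z).mp h)
  have := Zsq.norm_nonneg' hd z
  omega

lemma Zsq.noZeroDivisors (hd : 0 < d) : NoZeroDivisors (ℤ√(-(d:ℤ))) := by
  constructor
  intro a b hab
  by_contra h
  push_neg at h
  have : (a*b).norm = 0 := by rw [hab]; simp [Zsqrtd.norm]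
  rw [Zsqrtd.norm_mul] at this
  rcases mul_eq_zero.mp this with h1 | h1
  · exact h.1 ((Zsqrtd.norm_eq_zero_iff (by omega : -(d:ℤ) < 0) a).mp h1)
  · exact h.2 ((Zsqrtd.norm_eq_zero_iff (by omega : -(d:ℤ) < 0) b).mp h1)

lemma Zsq.isDomain (hd : 0 < d) : IsDomain (ℤ√(-(d:ℤ))) :=
  @NoZeroDivisors.to_isDomain _ _ ⟨⟨0, 1, by simp⟩⟩ (Zsq.noZeroDivisors hd)

/-- units are ±1 when d ≥ 2 -/
lemma Zsq.unit_eq (hd : 2 ≤ d) {u : ℤ√(-(d:ℤ))} (hu : IsUnit u) : u = 1 ∨ u = -1 := by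
  obtain ⟨v, hv⟩ : ∃ v, u * v = 1 := by
    obtain ⟨w, rfl⟩ := hu
    exact ⟨(w⁻¹ : _), by simp [← Units.val_mul]⟩
  have hnorm : u.norm * v.norm = 1 := by
    rw [← Zsqrtd.norm_mul, hv]; simp [Zsqrtd.norm]
  have h1 : u.norm = 1 := by
    rcases Int.eq_one_or_neg_one_of_mul_eq_one' hnorm with ⟨h,_⟩ | ⟨h,_⟩
    · exact h
    · have := Zsq.norm_nonneg' (by omega) u; omega
  rw [Zsq.norm_def] at h1
  have hdd : (2:ℤ) ≤ d := by exact_mod_cast hd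
  have him : u.im = 0 := by nlinarith [mul_self_nonneg u.re, mul_self_nonneg u.im]
  rw [him] at h1; simp at h1
  rcases Int.eq_one_or_neg_one_of_mul_eq_one h1 with h | h
  · left; ext <;> simp [h, him]
  · right; ext <;> simp [h, him]

end Helpers

section ConjIdeal

variable {d : ℕ}

/-- conjugation as a ring hom -/
noncomputable def conjHom (d : ℕ) : ℤ√(-(d:ℤ)) →+* ℤ√(-(d:ℤ)) := starRingEnd _

/-- conjugate of an ideal -/
noncomputable def conjI {d : ℕ} (I : Ideal (ℤ√(-(d:ℤ)))) : Ideal (ℤ√(-(d:ℤ))) :=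
  Ideal.map (conjHom d) I

lemma conjI_eq_comap (I : Ideal (ℤ√(-(d:ℤ)))) : conjI I = Ideal.comap (conjHom d) I := by
  apply le_antisymm
  · rw [conjI, Ideal.map_le_iff_le_comap]
    intro z hz
    simp only [Ideal.mem_comap, conjHom, RingHom.coe_comp, Function.comp_apply]
    show star (star z) ∈ I
    simpa using hz
  · intro z hz
    have : z = (conjHom d) ((conjHom d) z) := by
      show z = star (star z); simp
    rw [this]
    exact Ideal.mem_map_of_mem _ hz

lemma mem_conjI {I : Ideal (ℤ√(-(d:ℤ)))} {z : ℤ√(-(d:ℤ))} : z ∈ conjI I ↔ star z ∈ I := by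
  rw [conjI_eq_comap]; rfl

lemma conjI_mul (I J : Ideal (ℤ√(-(d:ℤ)))) : conjI (I * J) = conjI I * conjI J :=
  Ideal.map_mul _ I J

lemma conjI_span_singleton (w : ℤ√(-(d:ℤ))) :
    conjI (Ideal.span {w}) = Ideal.span {star w} := by
  rw [conjI, Ideal.map_span, Set.image_singleton]; rfl

lemma conjI_conjI (I : Ideal (ℤ√(-(d:ℤ)))) : conjI (conjI I) = I := by
  ext z
  rw [mem_conjI, mem_conjI, star_star]

lemma conjI_ne_bot {I : Ideal (ℤ√(-(d:ℤ)))} (hI : I ≠ ⊥) : conjI I ≠ ⊥ := by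
  intro h
  apply hI
  rw [eq_bot_iff]
  intro z hz
  have : star z ∈ conjI I := mem_conjI.mpr (by simpa using hz)
  rw [h] at this
  simp only [Ideal.mem_bot] at this ⊢
  simpa [Zsqrtd.ext_iff] using this

/-- cancellation of a nonzero principal ideal in a domain -/
lemma span_singleton_cancel {R : Type*} [CommRing R] [IsDomain R] {x : R} (hx : x ≠ 0)
    {I J : Ideal R} (h : Ideal.span {x} * I = Ideal.span {x} * J) : I = J := by
  ext z
  constructor <;> intro hz
  · have : x * z ∈ Ideal.span {x} * J := by
      rw [← h]; exact Ideal.mem_span_singleton_mul.mpr ⟨z, hz, rfl⟩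
    obtain ⟨j, hj, hxj⟩ := Ideal.mem_span_singleton_mul.mp this
    rwa [← mul_left_cancel₀ hx hxj]
  · have : x * z ∈ Ideal.span {x} * I := by
      rw [h]; exact Ideal.mem_span_singleton_mul.mpr ⟨z, hz, rfl⟩
    obtain ⟨j, hj, hxj⟩ := Ideal.mem_span_singleton_mul.mp this
    rwa [← mul_left_cancel₀ hx hxj]

end ConjIdeal

section Structure

variable {d : ℕ}

lemma Zsq.mk_re (x y : ℤ) : ((⟨x,y⟩ : ℤ√(-(d:ℤ))).re) = x := rfl
lemma Zsq.mk_im (x y : ℤ) : ((⟨x,y⟩ : ℤ√(-(d:ℤ))).im) = y := rfl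

/-- the additive hom extracting the im part -/
def imHom (d : ℕ) : ℤ√(-(d:ℤ)) →+ ℤ where
  toFun z := z.im
  map_zero' := rfl
  map_add' _ _ := rfl

lemma prim_ne_bot {b : Ideal (ℤ√(-(d:ℤ)))} (hb : IsPrimitiveIdeal b) : b ≠ ⊥ := by
  intro h
  exact hb 2 one_lt_two (h ▸ bot_le)

lemma natAbs_cast_zsq (a : ℤ) : ((a.natAbs : ℤ) : ℤ√(-(d:ℤ))) = (a.natAbs : ℤ√(-(d:ℤ))) :=
  Int.cast_natCast _

/-- Structure of a primitive nonzero ideal: it equals the lattice {x+y√-d : n ∣ x - r y}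
with n its norm. -/
lemma primitive_structure (hd : 0 < d) {b : Ideal (ℤ√(-(d:ℤ)))} (hb : IsPrimitiveIdeal b) :
    ∃ n : ℕ, 0 < n ∧ idealNorm b = n ∧
      ∃ r : ℤ, (∀ z : ℤ√(-(d:ℤ)), z ∈ b ↔ (n:ℤ) ∣ (z.re - r * z.im)) := by
  classical
  have hbne : b ≠ ⊥ := prim_ne_bot hb
  obtain ⟨ζ, hζb, hζ⟩ : ∃ ζ ∈ b, ζ ≠ 0 := Submodule.exists_mem_ne_zero_of_ne_bot hbne
  set H : AddSubgroup ℤ := AddSubgroup.comap (Int.castAddHom (ℤ√(-(d:ℤ)))) b.toAddSubgroup with hH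
  obtain ⟨a1, ha1⟩ := Int.subgroup_cyclic H
  have memH : ∀ k : ℤ, ((k : ℤ√(-(d:ℤ))) ∈ b ↔ a1 ∣ k) := by
    intro k
    have h0 : (k ∈ H) ↔ ((k : ℤ√(-(d:ℤ))) ∈ b) := Iff.rfl
    rw [← h0, ha1, AddSubgroup.mem_closure_singleton]
    constructor
    · rintro ⟨n, rfl⟩; exact ⟨n, by rw [mul_comm]; simp [zsmul_eq_mul]⟩
    · rintro ⟨n, rfl⟩; exact ⟨n, by rw [mul_comm]; simp [zsmul_eq_mul]⟩
  have hnormζ : ((ζ.norm : ℤ√(-(d:ℤ)))) ∈ b := by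
    rw [Zsqrtd.norm_eq_mul_conj]
    exact Ideal.mul_mem_right _ _ hζb
  have ha1ne : a1 ≠ 0 := by
    intro h
    obtain ⟨k, hk⟩ := (memH ζ.norm).mp hnormζ
    rw [h] at hk
    simp at hk
    exact absurd hk (by have := Zsq.norm_pos hd hζ; omega)
  set J : AddSubgroup ℤ := AddSubgroup.map (imHom d) b.toAddSubgroup with hJ
  obtain ⟨a2, ha2⟩ := Int.subgroup_cyclic J
  have memJ : ∀ k : ℤ, (k ∈ J ↔ a2 ∣ k) := by
    intro k
    rw [ha2, AddSubgroup.mem_closure_singleton]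
    constructor
    · rintro ⟨n, rfl⟩; exact ⟨n, by rw [mul_comm]; simp [zsmul_eq_mul]⟩
    · rintro ⟨n, rfl⟩; exact ⟨n, by rw [mul_comm]; simp [zsmul_eq_mul]⟩
  have memJ' : ∀ z ∈ b, a2 ∣ z.im := by
    intro z hz
    exact (memJ z.im).mp ⟨z, hz, rfl⟩
  have ha1J : a2 ∣ a1 := by
    have h1 : ((a1 : ℤ√(-(d:ℤ)))) ∈ b := (memH a1).mpr dvd_rfl
    have h2 : ((a1 : ℤ√(-(d:ℤ))) * Zsqrtd.sqrtd) ∈ b := Ideal.mul_mem_right _ _ h1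
    have := memJ' _ h2
    simpa using this
  have ha2ne : a2 ≠ 0 := fun h => ha1ne (by simpa [h] using ha1J)
  obtain ⟨zt, hztb, hztim⟩ : ∃ z ∈ b, z.im = a2 := by
    have h0 : a2 ∈ J := (memJ a2).mpr dvd_rfl
    obtain ⟨z, hz, hz2⟩ := h0
    exact ⟨z, hz, hz2⟩
  have ha2re : a2 ∣ zt.re := by
    have h2 : (zt * Zsqrtd.sqrtd) ∈ b := Ideal.mul_mem_right _ _ hztb
    have := memJ' _ h2
    simpa using this
  have hdec : ∀ z ∈ b, ∃ c : ℤ, z.im = c * a2 ∧ a1 ∣ (z.re - c * zt.re) := by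
    intro z hz
    obtain ⟨c, hc⟩ := memJ' z hz
    refine ⟨c, by rw [mul_comm] at hc; exact hc, ?_⟩
    have hzc : z - (c : ℤ√(-(d:ℤ))) * zt ∈ b :=
      Submodule.sub_mem _ hz (Ideal.mul_mem_left _ _ hztb)
    have hre : (z - (c : ℤ√(-(d:ℤ))) * zt).re = z.re - c * zt.re := by
      simp only [Zsqrtd.re_sub, Zsqrtd.re_mul, Zsqrtd.re_intCast, Zsqrtd.im_intCast]
      ring
    have him : (z - (c : ℤ√(-(d:ℤ))) * zt).im = 0 := by
      simp only [Zsqrtd.im_sub, Zsqrtd.im_mul, Zsqrtd.re_intCast, Zsqrtd.im_intCast]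
      linear_combination hc - c * hztim
    have heq : (((z.re - c * zt.re) : ℤ) : ℤ√(-(d:ℤ))) = z - (c : ℤ√(-(d:ℤ))) * zt := by
      ext
      · rw [hre]; simp
      · rw [him]; simp
    exact (memH _).mp (by rw [heq]; exact hzc)
  have ha2one : a2 = 1 ∨ a2 = -1 := by
    by_contra hcon
    push_neg at hcon
    have h2 : 1 < a2.natAbs := by
      rcases Int.natAbs_eq a2 with h | h <;> omega
    apply hb a2.natAbs h2
    intro z hz
    rw [Ideal.mem_span_singleton, ← natAbs_cast_zsq, Zsqrtd.intCast_dvd]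
    obtain ⟨c, him, hdvd⟩ := hdec z hz
    have h3 : (a2.natAbs : ℤ) ∣ a1 := (Int.natAbs_dvd).mpr ha1J
    have h4 : (a2.natAbs : ℤ) ∣ zt.re := (Int.natAbs_dvd).mpr ha2re
    have h5 : (a2.natAbs : ℤ) ∣ a2 := (Int.natAbs_dvd).mpr dvd_rfl
    constructor
    · have h6 : (a2.natAbs : ℤ) ∣ (z.re - c * zt.re) := dvd_trans h3 hdvd
      have h7 : (a2.natAbs : ℤ) ∣ c * zt.re := Dvd.dvd.mul_left h4 c
      have h8 := dvd_add h6 h7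
      simpa using h8
    · rw [him]
      exact Dvd.dvd.mul_left h5 c
  obtain ⟨r, hrb⟩ : ∃ r : ℤ, (⟨r, 1⟩ : ℤ√(-(d:ℤ))) ∈ b := by
    rcases ha2one with h | h
    · exact ⟨zt.re, by convert hztb using 1; ext <;> simp [hztim, h]⟩
    · refine ⟨-zt.re, ?_⟩
      have h0 : (⟨-zt.re, 1⟩ : ℤ√(-(d:ℤ))) = -zt := by ext <;> simp [hztim, h]
      rw [h0]; exact Submodule.neg_mem _ hztb
  set n : ℕ := a1.natAbs with hn
  have hnpos : 0 < n := by positivity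
  have hnb : ((n : ℤ) : ℤ√(-(d:ℤ))) ∈ b := (memH _).mpr (Int.dvd_natAbs.mpr dvd_rfl)
  have hchar : ∀ z : ℤ√(-(d:ℤ)), z ∈ b ↔ (n:ℤ) ∣ (z.re - r * z.im) := by
    intro z
    constructor
    · intro hz
      have hsub : z - (z.im : ℤ√(-(d:ℤ))) * (⟨r, 1⟩ : ℤ√(-(d:ℤ))) ∈ b :=
        Submodule.sub_mem _ hz (Ideal.mul_mem_left _ _ hrb)
      have heq : (((z.re - r * z.im) : ℤ) : ℤ√(-(d:ℤ)))
          = z - (z.im : ℤ√(-(d:ℤ))) * (⟨r, 1⟩ : ℤ√(-(d:ℤ))) := by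
        ext
        · simp only [Zsqrtd.re_sub, Zsqrtd.re_mul, Zsqrtd.re_intCast, Zsqrtd.im_intCast,
            Zsq.mk_re, Zsq.mk_im]
          ring
        · simp only [Zsqrtd.im_sub, Zsqrtd.im_mul, Zsqrtd.re_intCast, Zsqrtd.im_intCast,
            Zsq.mk_re, Zsq.mk_im]
          ring
      have := (memH _).mp (by rw [heq]; exact hsub)
      rw [hn, Int.natAbs_dvd]
      exact this
    · intro hdvd
      obtain ⟨k, hk⟩ := hdvd
      have heq : z = (z.im : ℤ√(-(d:ℤ))) * (⟨r, 1⟩ : ℤ√(-(d:ℤ)))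
          + (k : ℤ√(-(d:ℤ))) * ((n : ℤ) : ℤ√(-(d:ℤ))) := by
        ext
        · simp only [Zsqrtd.re_add, Zsqrtd.re_mul, Zsqrtd.re_intCast, Zsqrtd.im_intCast,
            Zsq.mk_re, Zsq.mk_im]
          linear_combination hk
        · simp only [Zsqrtd.im_add, Zsqrtd.im_mul, Zsqrtd.re_intCast, Zsqrtd.im_intCast,
            Zsq.mk_re, Zsq.mk_im]
          ring
      rw [heq]
      exact Submodule.add_mem _ (Ideal.mul_mem_left _ _ hrb) (Ideal.mul_mem_left _ _ hnb)
  have hr2d : (n:ℤ) ∣ (r^2 + d) := by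
    have h1 : ((⟨r,1⟩ : ℤ√(-(d:ℤ))) * star ⟨r,1⟩) ∈ b := Ideal.mul_mem_right _ _ hrb
    have h2 := (hchar _).mp h1
    have h3 : ((⟨r,1⟩ : ℤ√(-(d:ℤ))) * star ⟨r,1⟩).re
        - r * ((⟨r,1⟩ : ℤ√(-(d:ℤ))) * star ⟨r,1⟩).im = r^2 + d := by
      simp only [Zsqrtd.re_mul, Zsqrtd.im_mul, Zsqrtd.re_star, Zsqrtd.im_star,
        Zsq.mk_re, Zsq.mk_im]
      ring
    rwa [h3] at h2
  refine ⟨n, hnpos, ?_, r, hchar⟩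
  let f : ℤ√(-(d:ℤ)) →+* ZMod n := {
    toFun := fun z => (z.re : ZMod n) - (r : ZMod n) * (z.im : ZMod n)
    map_one' := by simp
    map_zero' := by simp
    map_add' := by intro x y; push_cast [Zsqrtd.re_add, Zsqrtd.im_add]; ring
    map_mul' := by
      intro x y
      have h0 : ((r^2 + (d:ℤ) : ℤ) : ZMod n) = 0 := by
        rw [ZMod.intCast_zmod_eq_zero_iff_dvd]
        exact_mod_cast hr2d
      push_cast at h0
      push_cast [Zsqrtd.re_mul, Zsqrtd.im_mul]
      linear_combination (-((x.im : ZMod n) * (y.im : ZMod n))) * h0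
  }
  have hker : RingHom.ker f = b := by
    ext z
    rw [RingHom.mem_ker]
    show ((z.re : ZMod n) - (r : ZMod n) * (z.im : ZMod n)) = 0 ↔ z ∈ b
    rw [hchar z]
    rw [show ((z.re : ZMod n) - (r : ZMod n) * (z.im : ZMod n))
          = (((z.re - r * z.im : ℤ)) : ZMod n) by push_cast; ring]
    rw [ZMod.intCast_zmod_eq_zero_iff_dvd]
  have hsurj : Function.Surjective f := by
    intro x
    obtain ⟨k, rfl⟩ := ZMod.intCast_surjective x
    refine ⟨((k : ℤ) : ℤ√(-(d:ℤ))), ?_⟩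
    show (((k : ℤ√(-(d:ℤ))).re : ZMod n) - (r : ZMod n) * ((k : ℤ√(-(d:ℤ))).im : ZMod n)) = _
    simp
  have hequiv := RingHom.quotientKerEquivOfSurjective hsurj
  replace hequiv := (Ideal.quotEquivOfEq hker.symm).trans hequiv
  unfold idealNorm
  rw [Nat.card_congr hequiv.toEquiv, Nat.card_zmod]

end Structure

section FactA

variable {d : ℕ}

lemma bezout4 {a b c e : ℤ}
    (h : Int.gcd (Int.gcd (Int.gcd a b : ℤ) c : ℤ) e = 1) :
    ∃ u v w x : ℤ, a*u + b*v + c*w + e*x = 1 := by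
  set g1 : ℤ := (Int.gcd a b : ℤ) with hg1
  set g2 : ℤ := (Int.gcd g1 c : ℤ) with hg2
  have h1 : g1 = a * Int.gcdA a b + b * Int.gcdB a b := Int.gcd_eq_gcd_ab a b
  have h2 : g2 = g1 * Int.gcdA g1 c + c * Int.gcdB g1 c := Int.gcd_eq_gcd_ab g1 c
  have h3 : (1:ℤ) = g2 * Int.gcdA g2 e + e * Int.gcdB g2 e := by
    have := Int.gcd_eq_gcd_ab g2 e
    rw [h] at this
    exact_mod_cast this
  refine ⟨Int.gcdA a b * Int.gcdA g1 c * Int.gcdA g2 e,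
    Int.gcdB a b * Int.gcdA g1 c * Int.gcdA g2 e,
    Int.gcdB g1 c * Int.gcdA g2 e, Int.gcdB g2 e, ?_⟩
  linear_combination -h3 - (Int.gcdA g2 e) * h2 - (Int.gcdA g1 c * Int.gcdA g2 e) * h1

/-- the gcd condition from squarefree & d ≡ 2 mod 4 -/
lemma gcd_cond (hsf : Squarefree d) (hd4 : d % 4 = 2) {n : ℕ} {r c : ℤ}
    (hn : 0 < n) (hc : r^2 + (d:ℤ) = (n:ℤ) * c) :
    ∃ u v w x : ℤ, (n:ℤ)*u + (2*r)*v + (2*(d:ℤ))*w + c*x = 1 := by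
  apply bezout4
  by_contra hne
  set g : ℕ := Int.gcd (Int.gcd (Int.gcd (n:ℤ) (2*r) : ℤ) (2*(d:ℤ)) : ℤ) c with hg
  have t1 : (g:ℤ) ∣ ((Int.gcd (Int.gcd (n:ℤ) (2*r) : ℤ) (2*(d:ℤ)) : ℕ) : ℤ) :=
    (Int.gcd_dvd_left _ _)
  have t2 : ((Int.gcd (Int.gcd (n:ℤ) (2*r) : ℤ) (2*(d:ℤ)) : ℕ) : ℤ)
      ∣ ((Int.gcd (n:ℤ) (2*r) : ℕ) : ℤ) := (Int.gcd_dvd_left _ _)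
  have hgn : (g:ℤ) ∣ (n:ℤ) := (t1.trans t2).trans (Int.gcd_dvd_left _ _)
  have hgr : (g:ℤ) ∣ 2*r := (t1.trans t2).trans (Int.gcd_dvd_right _ _)
  have hgd : (g:ℤ) ∣ 2*(d:ℤ) := t1.trans (Int.gcd_dvd_right _ _)
  have hgc : (g:ℤ) ∣ c := (Int.gcd_dvd_right _ _)
  have hg0 : g ≠ 0 := by
    intro h0
    rw [h0] at hgn
    simp at hgn
    omega
  -- take the least prime factor
  set p : ℕ := g.minFac with hp
  have hpprime : p.Prime := Nat.minFac_prime hne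
  have hpg : (p:ℤ) ∣ (g:ℤ) := Int.natCast_dvd_natCast.mpr (Nat.minFac_dvd g)
  have hpn : (p:ℤ) ∣ (n:ℤ) := hpg.trans hgn
  have hpr2 : (p:ℤ) ∣ 2*r := hpg.trans hgr
  have hpd2 : (p:ℤ) ∣ 2*(d:ℤ) := hpg.trans hgd
  have hpc : (p:ℤ) ∣ c := hpg.trans hgc
  have hp2 : (p:ℤ)*(p:ℤ) ∣ (n:ℤ)*c := mul_dvd_mul hpn hpc
  rcases eq_or_ne p 2 with h2 | hodd
  · -- p = 2 : then 4 ∣ r² + d, contradiction mod 4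
    rw [h2] at hp2
    rw [← hc] at hp2
    have h4 : ((r^2 + (d:ℤ) : ℤ) : ZMod 4) = 0 := by
      rw [ZMod.intCast_zmod_eq_zero_iff_dvd]
      exact_mod_cast hp2
    have hd2 : ((d:ℕ) : ZMod 4) = 2 := by
      rw [← ZMod.natCast_mod, hd4]
      rfl
    push_cast at h4
    rw [hd2] at h4
    have : ∀ x : ZMod 4, x^2 + 2 ≠ 0 := by decide
    exact this _ h4
  · -- p odd prime
    have hpZprime : Prime (p:ℤ) := Nat.prime_iff_prime_int.mp hpprime
    have hp2' : ¬ ((p:ℤ) ∣ 2) := by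
      intro hdvd
      have h2n : p ∣ 2 := by exact_mod_cast hdvd
      exact hodd ((Nat.prime_dvd_prime_iff_eq hpprime Nat.prime_two).mp h2n)
    have hpr : (p:ℤ) ∣ r := ((hpZprime.dvd_mul.mp hpr2).resolve_left hp2')
    have hpd : (p:ℤ) ∣ (d:ℤ) := ((hpZprime.dvd_mul.mp hpd2).resolve_left hp2')
    have hpsq_d : (p:ℤ)*(p:ℤ) ∣ (d:ℤ) := by
      have h1 : (p:ℤ)*(p:ℤ) ∣ r^2 + (d:ℤ) := by rw [hc]; exact hp2
      have h2 : (p:ℤ)*(p:ℤ) ∣ r^2 := by rw [sq]; exact mul_dvd_mul hpr hpr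
      have := dvd_sub h1 h2
      simpa using this
    have : (p*p : ℕ) ∣ d := by exact_mod_cast hpsq_d
    exact hpprime.ne_one (Nat.isUnit_iff.mp (hsf p this))

end FactA

section FactAMain

variable {d : ℕ}

lemma star_intCast_zsq (k : ℤ) : star ((k : ℤ√(-(d:ℤ)))) = (k : ℤ√(-(d:ℤ))) := by
  ext <;> simp

/-- Fact A : a primitive ideal times its conjugate is the principal ideal on its norm -/
lemma primitive_mul_conj (hsf : Squarefree d) (hd4 : d % 4 = 2)
    {b : Ideal (ℤ√(-(d:ℤ)))} {n : ℕ} {r : ℤ} (hn : 0 < n)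
    (hchar : ∀ z : ℤ√(-(d:ℤ)), z ∈ b ↔ (n:ℤ) ∣ (z.re - r * z.im)) :
    b * conjI b = Ideal.span {((n:ℤ) : ℤ√(-(d:ℤ)))} := by
  have hrb : (⟨r, 1⟩ : ℤ√(-(d:ℤ))) ∈ b := by
    rw [hchar]; simp
  have hnb : (((n:ℤ)) : ℤ√(-(d:ℤ))) ∈ b := by
    rw [hchar]; simp
  have hnc : (((n:ℤ)) : ℤ√(-(d:ℤ))) ∈ conjI b := by
    rw [mem_conjI, star_intCast_zsq]; exact hnb
  have hrc : (⟨r, -1⟩ : ℤ√(-(d:ℤ))) ∈ conjI b := by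
    rw [mem_conjI]
    have : star (⟨r, -1⟩ : ℤ√(-(d:ℤ))) = ⟨r, 1⟩ := by ext <;> simp
    rw [this]; exact hrb
  have hr2d : (n:ℤ) ∣ (r^2 + d) := by
    have h1 : ((⟨r,1⟩ : ℤ√(-(d:ℤ))) * star ⟨r,1⟩) ∈ b := Ideal.mul_mem_right _ _ hrb
    have h2 := (hchar _).mp h1
    have h3 : ((⟨r,1⟩ : ℤ√(-(d:ℤ))) * star ⟨r,1⟩).re
        - r * ((⟨r,1⟩ : ℤ√(-(d:ℤ))) * star ⟨r,1⟩).im = r^2 + d := by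
      simp only [Zsqrtd.re_mul, Zsqrtd.im_mul, Zsqrtd.re_star, Zsqrtd.im_star,
        Zsq.mk_re, Zsq.mk_im]
      ring
    rwa [h3] at h2
  apply le_antisymm
  · -- b * conj b ≤ (n)
    rw [Ideal.mul_le]
    intro i hi j hj
    have hci : (n:ℤ) ∣ i.re - r * i.im := (hchar i).mp hi
    have hcj : (n:ℤ) ∣ j.re + r * j.im := by
      have := (hchar (star j)).mp (mem_conjI.mp hj)
      simpa using this
    rw [Ideal.mem_span_singleton, Zsqrtd.intCast_dvd]
    constructor
    · have h0 : (i*j).re = (i.re - r*i.im)*j.re + (r*i.im)*(j.re + r*j.im)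
          - (r^2+(d:ℤ))*(i.im*j.im) := by
        simp only [Zsqrtd.re_mul]
        ring
      rw [h0]
      exact dvd_sub (dvd_add (hci.mul_right _) (hcj.mul_left _)) (hr2d.mul_right _)
    · have h0 : (i*j).im = (i.re - r*i.im)*j.im + i.im*(j.re + r*j.im) := by
        simp only [Zsqrtd.im_mul]
        ring
      rw [h0]
      exact dvd_add (hci.mul_right _) (hcj.mul_left _)
  · -- (n) ≤ b * conj b
    rw [Ideal.span_le, Set.singleton_subset_iff]
    obtain ⟨cc, hcc⟩ := hr2d
    obtain ⟨u, v, w, x, huvwx⟩ := gcd_cond hsf hd4 hn hcc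
    set P : Ideal (ℤ√(-(d:ℤ))) := b * conjI b with hP
    have q1 : (((n:ℤ)*(n:ℤ) : ℤ) : ℤ√(-(d:ℤ))) ∈ P := by
      have := Ideal.mul_mem_mul hnb hnc
      convert this using 1
      push_cast; ring
    have q2 : (((r^2 + (d:ℤ) : ℤ)) : ℤ√(-(d:ℤ))) ∈ P := by
      have h0 := Ideal.mul_mem_mul hrb hrc
      have h1 : (⟨r,1⟩ : ℤ√(-(d:ℤ))) * ⟨r,-1⟩ = ((r^2 + (d:ℤ) : ℤ) : ℤ√(-(d:ℤ))) := by
        ext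
        · simp only [Zsqrtd.re_mul, Zsq.mk_re, Zsq.mk_im, Zsqrtd.re_intCast]
          ring
        · simp only [Zsqrtd.im_mul, Zsq.mk_re, Zsq.mk_im, Zsqrtd.im_intCast]
          ring
      rwa [h1] at h0
    have e3 : ((n:ℤ) : ℤ√(-(d:ℤ))) * ⟨r,-1⟩ ∈ P := Ideal.mul_mem_mul hnb hrc
    have e4 : (⟨r,1⟩ : ℤ√(-(d:ℤ))) * ((n:ℤ) : ℤ√(-(d:ℤ))) ∈ P := Ideal.mul_mem_mul hrb hnc
    have q3 : (((2*(n:ℤ)*r : ℤ)) : ℤ√(-(d:ℤ))) ∈ P := by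
      have h0 := Submodule.add_mem _ e3 e4
      have h1 : ((n:ℤ) : ℤ√(-(d:ℤ))) * ⟨r,-1⟩ + (⟨r,1⟩ : ℤ√(-(d:ℤ))) * ((n:ℤ) : ℤ√(-(d:ℤ)))
          = (((2*(n:ℤ)*r : ℤ)) : ℤ√(-(d:ℤ))) := by
        ext
        · simp only [Zsqrtd.re_add, Zsqrtd.re_mul, Zsq.mk_re, Zsq.mk_im,
            Zsqrtd.re_intCast, Zsqrtd.im_intCast]
          ring
        · simp only [Zsqrtd.im_add, Zsqrtd.im_mul, Zsq.mk_re, Zsq.mk_im,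
            Zsqrtd.re_intCast, Zsqrtd.im_intCast]
          ring
      rwa [h1] at h0
    have q4 : (((2*(n:ℤ)*(d:ℤ) : ℤ)) : ℤ√(-(d:ℤ))) ∈ P := by
      have h0 := Submodule.sub_mem _ (Ideal.mul_mem_left _ Zsqrtd.sqrtd e3)
        (Ideal.mul_mem_left _ Zsqrtd.sqrtd e4)
      have h1 : Zsqrtd.sqrtd * (((n:ℤ) : ℤ√(-(d:ℤ))) * ⟨r,-1⟩)
          - Zsqrtd.sqrtd * ((⟨r,1⟩ : ℤ√(-(d:ℤ))) * ((n:ℤ) : ℤ√(-(d:ℤ))))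
          = (((2*(n:ℤ)*(d:ℤ) : ℤ)) : ℤ√(-(d:ℤ))) := by
        ext
        · simp only [Zsqrtd.re_sub, Zsqrtd.re_mul, Zsqrtd.im_mul, Zsq.mk_re, Zsq.mk_im,
            Zsqrtd.re_intCast, Zsqrtd.im_intCast, Zsqrtd.re_sqrtd, Zsqrtd.im_sqrtd]
          ring
        · simp only [Zsqrtd.im_sub, Zsqrtd.re_mul, Zsqrtd.im_mul, Zsq.mk_re, Zsq.mk_im,
            Zsqrtd.re_intCast, Zsqrtd.im_intCast, Zsqrtd.re_sqrtd, Zsqrtd.im_sqrtd]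
          ring
      rwa [h1] at h0
    have key : ((n:ℤ) : ℤ√(-(d:ℤ)))
        = ((u:ℤ) : ℤ√(-(d:ℤ))) * (((n:ℤ)*(n:ℤ) : ℤ) : ℤ√(-(d:ℤ)))
        + ((v:ℤ) : ℤ√(-(d:ℤ))) * (((2*(n:ℤ)*r : ℤ)) : ℤ√(-(d:ℤ)))
        + ((w:ℤ) : ℤ√(-(d:ℤ))) * (((2*(n:ℤ)*(d:ℤ) : ℤ)) : ℤ√(-(d:ℤ)))
        + ((x:ℤ) : ℤ√(-(d:ℤ))) * (((r^2 + (d:ℤ) : ℤ)) : ℤ√(-(d:ℤ))) := by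
      have hint : (n:ℤ) = u * ((n:ℤ)*(n:ℤ)) + v * (2*(n:ℤ)*r) + w * (2*(n:ℤ)*(d:ℤ))
          + x * (r^2 + (d:ℤ)) := by
        rw [hcc]
        linear_combination (-(n:ℤ)) * huvwx
      calc ((n:ℤ) : ℤ√(-(d:ℤ)))
          = ((u * ((n:ℤ)*(n:ℤ)) + v * (2*(n:ℤ)*r) + w * (2*(n:ℤ)*(d:ℤ))
            + x * (r^2 + (d:ℤ)) : ℤ) : ℤ√(-(d:ℤ))) := by rw [← hint]
        _ = _ := by push_cast; ring
    rw [key]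
    exact Submodule.add_mem _ (Submodule.add_mem _ (Submodule.add_mem _
      (Ideal.mul_mem_left _ _ q1) (Ideal.mul_mem_left _ _ q3))
      (Ideal.mul_mem_left _ _ q4)) (Ideal.mul_mem_left _ _ q2)

end FactAMain

section Main

lemma floor_toNat_le {x : ℝ} (hx : 0 ≤ x) : ((⌊x⌋.toNat : ℝ)) ≤ x := by
  have h1 : (0:ℤ) ≤ ⌊x⌋ := Int.floor_nonneg.mpr hx
  have h2 : ((⌊x⌋.toNat : ℤ) : ℝ) = (⌊x⌋ : ℝ) := by
    rw [Int.toNat_of_nonneg h1]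
  push_cast at h2
  rw [h2]
  exact Int.floor_le x

set_option maxHeartbeats 2000000 in
/-- For a fixed squarefree `d ≡ 2 (mod 4)` and a fixed ideal class, the number of
primitive ideals `b` in that class with `N(b) ≤ Y√d` is `O(1 + Y)`, with an absolute
implied constant. -/
theorem count_primitive_in_class :
    ∃ C : ℝ, ∀ d : ℕ, Squarefree d → d % 4 = 2 →
      ∀ a : Ideal (ℤ√(-(d:ℤ))), a ≠ ⊥ → ∀ Y : ℝ, 0 < Y →
      (Nat.card {b : Ideal (ℤ√(-(d:ℤ))) //
        IsPrimitiveIdeal b ∧ SameIdealClass a b ∧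
        (idealNorm b : ℝ) ≤ Y * Real.sqrt d} : ℝ) ≤ C * (1 + Y) := by
  use 4
  intro d hsf hd4 a ha Y hY
  have hd2 : 2 ≤ d := by omega
  have hd0 : 0 < d := by omega
  haveI : IsDomain (ℤ√(-(d:ℤ))) := Zsq.isDomain hd0
  set T := {b : Ideal (ℤ√(-(d:ℤ))) //
        IsPrimitiveIdeal b ∧ SameIdealClass a b ∧
        (idealNorm b : ℝ) ≤ Y * Real.sqrt d} with hT
  have hconst : (0:ℝ) ≤ 4 * (1 + Y) := by nlinarith
  rcases isEmpty_or_nonempty T with hE | hNE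
  · rw [Nat.card_of_isEmpty]
    simpa using hconst
  -- pick a base point a0 in the class
  obtain ⟨a0, ha0prim, ha0class, ha0normle⟩ := Classical.arbitrary T
  -- structure of a0
  obtain ⟨n0, hn0pos, hn0norm, r0, hchar0⟩ := primitive_structure hd0 ha0prim
  have hFactA0 : a0 * conjI a0 = Ideal.span {((n0:ℤ) : ℤ√(-(d:ℤ)))} :=
    primitive_mul_conj hsf hd4 hn0pos hchar0
  -- structures for all b
  have hstr : ∀ b : T, ∃ n : ℕ, 0 < n ∧ idealNorm b.1 = n ∧
      ∃ r : ℤ, (∀ z : ℤ√(-(d:ℤ)), z ∈ b.1 ↔ (n:ℤ) ∣ (z.re - r * z.im)) :=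
    fun b => primitive_structure hd0 b.2.1
  choose NB hNBpos hNBnorm RB hcharB using hstr
  have hFactB : ∀ b : T, b.1 * conjI b.1 = Ideal.span {((NB b : ℤ) : ℤ√(-(d:ℤ)))} :=
    fun b => primitive_mul_conj hsf hd4 (hNBpos b) (hcharB b)
  -- principal generator of b * conj a0
  have hn0ne : ((n0:ℤ) : ℤ√(-(d:ℤ))) ≠ 0 := by
    intro h
    rw [Zsqrtd.ext_iff] at h
    simp at h
    omega
  have hkey : ∀ b : T, ∃ w : ℤ√(-(d:ℤ)), b.1 * conjI a0 = Ideal.span {w} ∧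
      (0 < w.im ∨ (w.im = 0 ∧ 0 < w.re)) := by
    rintro ⟨b, hbprim, hbclass, hble⟩
    obtain ⟨x1, y1, hx1, hy1, hxy1⟩ := hbclass
    obtain ⟨x0, y0, hx0, hy0, hxy0⟩ := ha0class
    -- span{y0*x1} * b = span{y1*x0} * a0
    have hcomb : Ideal.span {y0*x1} * b = Ideal.span {y1*x0} * a0 := by
      have e1 : Ideal.span {y0*x1} * b = Ideal.span {y0} * (Ideal.span {x1} * b) := by
        rw [← Ideal.span_singleton_mul_span_singleton, mul_assoc]
      have e2 : Ideal.span {y1*x0} * a0 = Ideal.span {y1} * (Ideal.span {x0} * a0) := by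
        rw [← Ideal.span_singleton_mul_span_singleton, mul_assoc]
      rw [e1, e2, hxy1, hxy0]
      ring
    set x := y0*x1 with hx
    set y := y1*x0 with hy
    have hxne : x ≠ 0 := mul_ne_zero hy0 hx1
    have hyne : y ≠ 0 := mul_ne_zero hy1 hx0
    -- multiply by conj a0
    have hmul : Ideal.span {x} * (b * conjI a0) = Ideal.span {y * ((n0:ℤ) : ℤ√(-(d:ℤ)))} := by
      calc Ideal.span {x} * (b * conjI a0) = (Ideal.span {x} * b) * conjI a0 := by ring
        _ = (Ideal.span {y} * a0) * conjI a0 := by rw [hcomb]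
        _ = Ideal.span {y} * (a0 * conjI a0) := by ring
        _ = Ideal.span {y} * Ideal.span {((n0:ℤ) : ℤ√(-(d:ℤ)))} := by rw [hFactA0]
        _ = Ideal.span {y * ((n0:ℤ) : ℤ√(-(d:ℤ)))} := Ideal.span_singleton_mul_span_singleton _ _
    have hmem : y * ((n0:ℤ) : ℤ√(-(d:ℤ))) ∈ Ideal.span {x} * (b * conjI a0) := by
      rw [hmul]
      exact Ideal.subset_span rfl
    obtain ⟨u, hu, hxu⟩ := Ideal.mem_span_singleton_mul.mp hmem
    have huspan : b * conjI a0 = Ideal.span {u} := by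
      apply span_singleton_cancel hxne
      rw [hmul, ← hxu, Ideal.span_singleton_mul_span_singleton]
    have hune : u ≠ 0 := by
      intro h0
      rw [h0, mul_zero] at hxu
      exact (mul_ne_zero hyne hn0ne) hxu.symm
    -- normalize sign
    rcases lt_trichotomy u.im 0 with him | him | him
    · refine ⟨-u, ?_, ?_⟩
      · rw [huspan, Ideal.span_singleton_neg]
      · left; simp; omega
    · rcases lt_trichotomy u.re 0 with hre | hre | hre
      · refine ⟨-u, ?_, ?_⟩
        · rw [huspan, Ideal.span_singleton_neg]
        · right; constructor <;> simp [him] <;> omega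
      · exact absurd (show u = 0 by ext <;> simp [hre, him]) hune
      · exact ⟨u, huspan, Or.inr ⟨him, hre⟩⟩
    · exact ⟨u, huspan, Or.inl him⟩
  choose W hWspan hWstd using hkey
  have hWne : ∀ b : T, W b ≠ 0 := by
    intro b h0
    rcases hWstd b with h | ⟨h1, h2⟩
    · rw [h0] at h; simp at h
    · rw [h0] at h2; simp at h2
  -- conjugated span equation
  have hconjspan : ∀ b : T, conjI b.1 * a0 = Ideal.span {star (W b)} := by
    intro b
    have h1 := congrArg conjI (hWspan b)
    rw [conjI_mul, conjI_conjI, conjI_span_singleton] at h1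
    exact h1
  -- the norm equation
  have hsq : ∀ b : T, ((W b).re)^2 + (d:ℤ)*((W b).im)^2 = (NB b : ℤ) * (n0 : ℤ) := by
    intro b
    have hprod : Ideal.span {W b * star (W b)}
        = Ideal.span {(((NB b : ℤ) * (n0:ℤ) : ℤ) : ℤ√(-(d:ℤ)))} := by
      calc Ideal.span {W b * star (W b)}
          = Ideal.span {W b} * Ideal.span {star (W b)} :=
            (Ideal.span_singleton_mul_span_singleton _ _).symm
        _ = (b.1 * conjI a0) * (conjI b.1 * a0) := by rw [hWspan b, hconjspan b]
        _ = (b.1 * conjI b.1) * (a0 * conjI a0) := by ring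
        _ = Ideal.span {((NB b : ℤ) : ℤ√(-(d:ℤ)))} * Ideal.span {((n0:ℤ) : ℤ√(-(d:ℤ)))} := by
            rw [hFactB b, hFactA0]
        _ = Ideal.span {(((NB b : ℤ) * (n0:ℤ) : ℤ) : ℤ√(-(d:ℤ)))} := by
            rw [Ideal.span_singleton_mul_span_singleton]
            norm_cast
    obtain ⟨u, hu⟩ := Ideal.span_singleton_eq_span_singleton.mp hprod
    have hwnorm : ((W b).norm : ℤ√(-(d:ℤ))) * u = (((NB b : ℤ) * (n0:ℤ) : ℤ) : ℤ√(-(d:ℤ))) := by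
      rw [Zsqrtd.norm_eq_mul_conj]
      exact hu
    have hNn0pos : (0:ℤ) < (NB b : ℤ) * (n0:ℤ) := by
      have := hNBpos b
      positivity
    have hnormval : (W b).norm = (NB b : ℤ) * (n0:ℤ) := by
      rcases Zsq.unit_eq hd2 u.isUnit with h | h
      · rw [h, mul_one] at hwnorm
        exact_mod_cast hwnorm
      · rw [h] at hwnorm
        have h4 : ((-(W b).norm : ℤ) : ℤ√(-(d:ℤ))) = (((NB b : ℤ) * (n0:ℤ) : ℤ) : ℤ√(-(d:ℤ))) := by
          rw [← hwnorm]
          push_cast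
          ring
        have h2 : -(W b).norm = (NB b : ℤ) * (n0:ℤ) := by exact_mod_cast h4
        have h3 := Zsq.norm_nonneg' hd0 (W b)
        omega
    rw [Zsq.norm_def] at hnormval
    linear_combination hnormval
  -- the congruence
  have hcong : ∀ b : T, (n0:ℤ) ∣ ((W b).re + r0 * (W b).im) := by
    intro b
    have hmem : W b ∈ conjI a0 := by
      have h1 : W b ∈ Ideal.span {W b} := Ideal.mem_span_singleton_self _
      rw [← hWspan b] at h1
      exact Ideal.mul_le_right h1
    have h2 := (hchar0 (star (W b))).mp (mem_conjI.mp hmem)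
    rw [Zsqrtd.re_star, Zsqrtd.im_star] at h2
    have h3 : (W b).re + r0 * (W b).im = (W b).re - r0 * -(W b).im := by ring
    rw [h3]
    exact h2
  -- injectivity of W
  have hWinj : Function.Injective W := by
    intro b b' heq
    have h1 : b.1 * conjI a0 = b'.1 * conjI a0 := by
      rw [hWspan b, hWspan b', heq]
    have h2 : Ideal.span {((n0:ℤ) : ℤ√(-(d:ℤ)))} * b.1
        = Ideal.span {((n0:ℤ) : ℤ√(-(d:ℤ)))} * b'.1 := by
      calc Ideal.span {((n0:ℤ) : ℤ√(-(d:ℤ)))} * b.1 = (a0 * conjI a0) * b.1 := by rw [hFactA0]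
        _ = a0 * (b.1 * conjI a0) := by ring
        _ = a0 * (b'.1 * conjI a0) := by rw [h1]
        _ = (a0 * conjI a0) * b'.1 := by ring
        _ = _ := by rw [hFactA0]
    exact Subtype.ext (span_singleton_cancel hn0ne h2)
  -- memberships of integers
  have hn0A0c : ((n0:ℤ) : ℤ√(-(d:ℤ))) ∈ conjI a0 := by
    rw [mem_conjI, star_intCast_zsq, hchar0]
    simp
  -- t = 0 forces w = n0
  have ht0 : ∀ b : T, (W b).im = 0 → (W b).re = n0 := by
    intro b ht
    set s : ℤ := (W b).re with hsdef
    have hw : W b = ((s : ℤ) : ℤ√(-(d:ℤ))) := by ext <;> simp [ht, hsdef]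
    have hsne : s ≠ 0 := by
      intro h0
      exact hWne b (by rw [hw, h0]; simp)
    have hs2 : s^2 = (NB b : ℤ) * (n0:ℤ) := by
      have h1 := hsq b
      rw [ht] at h1
      simpa using h1
    have hNBne : ((NB b : ℤ) : ℤ√(-(d:ℤ))) ≠ 0 := by
      intro h
      rw [Zsqrtd.ext_iff] at h
      simp at h
      have := hNBpos b
      omega
    have hE : Ideal.span {((NB b : ℤ) : ℤ√(-(d:ℤ)))} * conjI a0
        = Ideal.span {((s:ℤ) : ℤ√(-(d:ℤ)))} * conjI b.1 := by
      calc Ideal.span {((NB b : ℤ) : ℤ√(-(d:ℤ)))} * conjI a0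
          = (b.1 * conjI b.1) * conjI a0 := by rw [hFactB b]
        _ = conjI b.1 * (b.1 * conjI a0) := by ring
        _ = conjI b.1 * Ideal.span {W b} := by rw [hWspan b]
        _ = conjI b.1 * Ideal.span {((s:ℤ) : ℤ√(-(d:ℤ)))} := by rw [← hw]
        _ = _ := by ring
    -- direction 1 : NB b divides s
    have hNBs : (NB b : ℤ) ∣ s := by
      have hmem1 : (((NB b : ℤ) * (n0:ℤ) : ℤ) : ℤ√(-(d:ℤ)))
          ∈ Ideal.span {((NB b : ℤ) : ℤ√(-(d:ℤ)))} * conjI a0 := by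
        apply Ideal.mem_span_singleton_mul.mpr
        exact ⟨((n0:ℤ) : ℤ√(-(d:ℤ))), hn0A0c, by push_cast; ring⟩
      rw [hE] at hmem1
      obtain ⟨j, hj, hsj⟩ := Ideal.mem_span_singleton_mul.mp hmem1
      have hre := congrArg Zsqrtd.re hsj
      have him := congrArg Zsqrtd.im hsj
      simp only [Zsqrtd.re_mul, Zsqrtd.im_mul, Zsqrtd.re_intCast, Zsqrtd.im_intCast,
        zero_mul, mul_zero, add_zero, zero_add, neg_zero] at hre him
      -- hre : s * j.re = NB b * n0 ; him : s * j.im = 0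
      have hjim : j.im = 0 := by
        rcases mul_eq_zero.mp him with h | h
        · exact absurd h hsne
        · exact h
      have hk : (NB b : ℤ) ∣ j.re := by
        have hjb := (hcharB b (star j)).mp (mem_conjI.mp hj)
        rw [Zsqrtd.re_star, Zsqrtd.im_star, hjim] at hjb
        simpa using hjb
      have hks : j.re = s := by
        have h1 : s * j.re = s * s := by
          rw [hre]; rw [← hs2]; ring
        exact mul_left_cancel₀ hsne h1
      rwa [hks] at hk
    -- direction 2 : n0 divides s
    have hn0s : (n0 : ℤ) ∣ s := by
      have hNBconj : ((NB b : ℤ) : ℤ√(-(d:ℤ))) ∈ conjI b.1 := by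
        rw [mem_conjI, star_intCast_zsq, hcharB b]
        simp
      have hmem2 : (((s * NB b : ℤ)) : ℤ√(-(d:ℤ)))
          ∈ Ideal.span {((s:ℤ) : ℤ√(-(d:ℤ)))} * conjI b.1 := by
        apply Ideal.mem_span_singleton_mul.mpr
        exact ⟨((NB b : ℤ) : ℤ√(-(d:ℤ))), hNBconj, by push_cast; ring⟩
      rw [← hE] at hmem2
      obtain ⟨i, hi, hni⟩ := Ideal.mem_span_singleton_mul.mp hmem2
      have hre := congrArg Zsqrtd.re hni
      have him := congrArg Zsqrtd.im hni
      simp only [Zsqrtd.re_mul, Zsqrtd.im_mul, Zsqrtd.re_intCast, Zsqrtd.im_intCast,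
        zero_mul, mul_zero, add_zero, zero_add, neg_zero] at hre him
      -- hre : NB b * i.re = s * NB b ; him : NB b * i.im = 0
      have hNBZne : ((NB b : ℤ)) ≠ 0 := by
        have := hNBpos b; omega
      have hiim : i.im = 0 := by
        rcases mul_eq_zero.mp him with h | h
        · exact absurd h hNBZne
        · exact h
      have hire : i.re = s := by
        apply mul_left_cancel₀ hNBZne
        rw [hre]; ring
      have hieq : i = ((s:ℤ) : ℤ√(-(d:ℤ))) := by ext <;> simp [hire, hiim]
      rw [hieq] at hi
      have h5 := mem_conjI.mp hi
      rw [star_intCast_zsq] at h5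
      have h6 := (hchar0 _).mp h5
      simpa using h6
    -- conclude
    obtain ⟨k1, hk1⟩ := hNBs
    obtain ⟨k2, hk2⟩ := hn0s
    have hprod1 : (NB b : ℤ) * (n0:ℤ) * (k1 * k2) = (NB b : ℤ) * (n0:ℤ) := by
      calc (NB b : ℤ) * (n0:ℤ) * (k1 * k2) = ((NB b : ℤ) * k1) * ((n0:ℤ) * k2) := by ring
        _ = s * s := by rw [← hk1, ← hk2]
        _ = (NB b : ℤ) * (n0:ℤ) := by rw [← hs2]; ring
    have hNn0ne : (NB b : ℤ) * (n0:ℤ) ≠ 0 := by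
      have h1 := hNBpos b
      positivity
    have hk12 : k1 * k2 = 1 := by
      have h7 : (k1*k2) * ((NB b : ℤ)*(n0:ℤ)) = 1 * ((NB b : ℤ)*(n0:ℤ)) := by
        linear_combination hprod1
      exact mul_right_cancel₀ hNn0ne h7
    have hspos : 0 < s := by
      rcases hWstd b with h | ⟨h1, h2⟩
      · rw [ht] at h; omega
      · exact h2
    rcases Int.eq_one_or_neg_one_of_mul_eq_one' (by linarith [hk12] : k2 * k1 = 1) with ⟨h,_⟩ | ⟨h,_⟩
    · rw [h, mul_one] at hk2; omega
    · rw [h] at hk2; omega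
  -- counting set-up
  set sd : ℝ := Real.sqrt d with hsd
  have hsdpos : 0 < sd := Real.sqrt_pos.mpr (by positivity)
  have hn0R : (0:ℝ) < n0 := by exact_mod_cast hn0pos
  have hn0le : (n0 : ℝ) ≤ Y * sd := by rw [← hn0norm]; exact ha0normle
  set R : ℝ := Real.sqrt (Y * sd * n0) with hR
  set B : ℝ := Real.sqrt (Y * n0 / sd) with hB
  have hRpos : 0 ≤ R := Real.sqrt_nonneg _
  have hBpos : 0 ≤ B := Real.sqrt_nonneg _
  set BI : ℤ := ⌊B⌋ with hBI
  set K : ℤ := ⌊2*R/(n0:ℝ)⌋ with hK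
  choose Q hQ using hcong
  -- bounds for nonzero t
  have hsd2 : sd * sd = (d:ℝ) := Real.mul_self_sqrt (by positivity)
  have hR2 : R^2 = Y * sd * (n0:ℝ) := Real.sq_sqrt (by positivity)
  have hNBle : ∀ b : T, (NB b : ℝ) ≤ Y * sd := by
    intro b
    rw [← hNBnorm b]
    exact b.2.2.2
  have hsqR : ∀ b : T, ((W b).re : ℝ)^2 + (d:ℝ)*((W b).im : ℝ)^2 = (NB b : ℝ) * (n0 : ℝ) := by
    intro b
    exact_mod_cast congrArg (Int.cast : ℤ → ℝ) (hsq b)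
  have hsbound : ∀ b : T, ((W b).re : ℝ)^2 ≤ R^2 := by
    intro b
    rw [hR2]
    have h1 := hsqR b
    have h2 := hNBle b
    nlinarith [sq_nonneg ((W b).im : ℝ), hn0R]
  have htmem : ∀ b : T, (W b).im ≠ 0 → (W b).im ∈ Finset.Icc (1:ℤ) BI := by
    intro b h
    rw [Finset.mem_Icc]
    have htpos : 0 < (W b).im := by
      rcases hWstd b with h1 | ⟨h1, h2⟩
      · exact h1
      · exact absurd h1 h
    refine ⟨htpos, ?_⟩
    rw [hBI]
    apply Int.le_floor.mpr
    have ht2 : ((W b).im : ℝ)^2 ≤ Y * (n0:ℝ) / sd := by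
      rw [le_div_iff₀ hsdpos]
      have h1 := hsqR b
      have h2 := hNBle b
      nlinarith [sq_nonneg ((W b).re : ℝ), hn0R, hsd2]
    have htnn : (0:ℝ) ≤ ((W b).im : ℝ) := by exact_mod_cast htpos.le
    calc ((W b).im : ℝ) = Real.sqrt (((W b).im : ℝ)^2) := (Real.sqrt_sq htnn).symm
      _ ≤ B := Real.sqrt_le_sqrt ht2
  have hsabs : ∀ b : T, |((W b).re : ℝ)| ≤ R := by
    intro b
    calc |((W b).re : ℝ)| = Real.sqrt (((W b).re : ℝ)^2) := (Real.sqrt_sq_eq_abs _).symm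
      _ ≤ Real.sqrt (R^2) := Real.sqrt_le_sqrt (hsbound b)
      _ = R := Real.sqrt_sq hRpos
  have hqmem : ∀ b : T, (W b).im ≠ 0 →
      Q b - ⌈((r0 * (W b).im : ℝ) - R)/(n0:ℝ)⌉ ∈ Finset.Icc (0:ℤ) K := by
    intro b h
    rw [Finset.mem_Icc]
    have hQcast : (n0:ℝ) * (Q b : ℝ) = ((W b).re : ℝ) + (r0:ℝ) * ((W b).im : ℝ) := by
      exact_mod_cast congrArg (Int.cast : ℤ → ℝ) (hQ b).symm
    have habs := hsabs b
    have h1 : -R ≤ ((W b).re : ℝ) := by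
      have := abs_le.mp habs; linarith [this.1]
    have h2 : ((W b).re : ℝ) ≤ R := (abs_le.mp habs).2
    constructor
    · rw [sub_nonneg]
      apply Int.ceil_le.mpr
      rw [div_le_iff₀ hn0R]
      push_cast
      rw [mul_comm]
      linarith [hQcast]
    · rw [hK]
      apply Int.le_floor.mpr
      have hceil := Int.le_ceil (((r0:ℝ) * ((W b).im : ℝ) - R)/(n0:ℝ))
      have hqval : (Q b : ℝ) = (((W b).re : ℝ) + (r0:ℝ) * ((W b).im : ℝ))/(n0:ℝ) := by
        rw [eq_div_iff (ne_of_gt hn0R)]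
        linarith [hQcast]
      have hdiff : (((W b).re : ℝ) + (r0:ℝ) * ((W b).im : ℝ))/(n0:ℝ)
          - ((r0:ℝ) * ((W b).im : ℝ) - R)/(n0:ℝ) = (((W b).re : ℝ) + R)/(n0:ℝ) := by
        ring
      have hlast : (((W b).re : ℝ) + R)/(n0:ℝ) ≤ 2*R/(n0:ℝ) :=
        (div_le_div_iff_of_pos_right hn0R).mpr (by linarith)
      push_cast
      linarith [hceil, hqval, hdiff, hlast]
  -- the injection
  set G : T → Option (↥(Finset.Icc (1:ℤ) BI) × ↥(Finset.Icc (0:ℤ) K)) :=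
    fun b => if h : (W b).im = 0 then none else
      some (⟨(W b).im, htmem b h⟩, ⟨Q b - ⌈((r0 * (W b).im : ℝ) - R)/(n0:ℝ)⌉, hqmem b h⟩)
    with hG
  have hGinj : Function.Injective G := by
    intro b b' hgb
    simp only [hG] at hgb
    by_cases h : (W b).im = 0 <;> by_cases h' : (W b').im = 0
    · apply hWinj
      ext
      · rw [ht0 b h, ht0 b' h']
      · rw [h, h']
    · rw [dif_pos h, dif_neg h'] at hgb; exact absurd hgb (by simp)
    · rw [dif_neg h, dif_pos h'] at hgb; exact absurd hgb (by simp)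
    · rw [dif_neg h, dif_neg h'] at hgb
      rw [Option.some_inj, Prod.ext_iff, Subtype.ext_iff, Subtype.ext_iff] at hgb
      obtain ⟨h1, h2⟩ := hgb
      simp only at h1 h2
      rw [h1] at h2
      have hQeq : Q b = Q b' := by omega
      apply hWinj
      ext
      · have e1 := hQ b
        have e2 := hQ b'
        rw [h1, hQeq] at e1
        omega
      · exact h1
  have hcard : Nat.card T ≤ BI.toNat * (K+1).toNat + 1 := by
    have h1 := Nat.card_le_card_of_injective G hGinj
    have h2 : Nat.card (Option (↥(Finset.Icc (1:ℤ) BI) × ↥(Finset.Icc (0:ℤ) K)))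
        = (BI + 1 - 1).toNat * (K + 1 - 0).toNat + 1 := by
      rw [Nat.card_eq_fintype_card, Fintype.card_option, Fintype.card_prod,
        Fintype.card_coe, Fintype.card_coe, Int.card_Icc, Int.card_Icc]
    rw [h2] at h1
    calc Nat.card T ≤ (BI + 1 - 1).toNat * (K + 1 - 0).toNat + 1 := h1
      _ = BI.toNat * (K+1).toNat + 1 := by norm_num
  -- final real estimate
  have hBR : B * R = Y * n0 := by
    have hmul : (Y * (n0:ℝ) / sd) * (Y * sd * (n0:ℝ)) = (Y * (n0:ℝ))^2 := by
      field_simp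
    calc B * R = Real.sqrt ((Y * (n0:ℝ) / sd) * (Y * sd * (n0:ℝ))) :=
          (Real.sqrt_mul (by positivity) _).symm
      _ = Real.sqrt ((Y * (n0:ℝ))^2) := by rw [hmul]
      _ = Y * (n0:ℝ) := Real.sqrt_sq (by positivity)
  have hBY : B ≤ Y := by
    calc B ≤ Real.sqrt (Y*Y) := by
          apply Real.sqrt_le_sqrt
          rw [div_le_iff₀ hsdpos]
          nlinarith [hn0le, hY]
      _ = Y := Real.sqrt_mul_self hY.le
  calc (Nat.card T : ℝ) ≤ (BI.toNat * (K+1).toNat + 1 : ℕ) := by exact_mod_cast hcard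
    _ = (BI.toNat : ℝ) * ((K+1).toNat : ℝ) + 1 := by push_cast; ring
    _ ≤ B * (2*R/(n0:ℝ) + 1) + 1 := by
        have e1 : (BI.toNat : ℝ) ≤ B := floor_toNat_le hBpos
        have e2 : ((K+1).toNat : ℝ) ≤ 2*R/(n0:ℝ) + 1 := by
          have hK0 : (0:ℤ) ≤ K := Int.floor_nonneg.mpr (by positivity)
          have : ((K+1).toNat : ℝ) = ((K:ℝ) + 1) := by
            rw [show ((K+1).toNat : ℝ) = (((K+1).toNat : ℤ) : ℝ) by push_cast; ring,
              Int.toNat_of_nonneg (by omega)]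
            push_cast; ring
          rw [this]
          have := Int.floor_le (2*R/(n0:ℝ))
          rw [← hK] at this
          linarith
        have e3 : (0:ℝ) ≤ (BI.toNat : ℝ) := by positivity
        have e4 : (0:ℝ) ≤ ((K+1).toNat : ℝ) := by positivity
        have e5 : (0:ℝ) ≤ 2*R/(n0:ℝ) + 1 := by positivity
        nlinarith
    _ = 2*(B*R)/(n0:ℝ) + B + 1 := by field_simp
    _ ≤ 2*Y + Y + 1 := by
        rw [hBR]
        have : 2*(Y*(n0:ℝ))/(n0:ℝ) = 2*Y := by field_simp
        rw [this]
        linarith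
    _ ≤ 4 * (1 + Y) := by nlinarith

end Main
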